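/- Let m be a positive integer and let Φ_m denote the m-th cyclotomic polynomial (over ℤ). Then Φ_m ∈ 𝒫, i.e., there are infinitely many positive integers n such that Φ_m(n) divides n!. -/

import Mathlib

open Polynomial

namespace Stmt14Aux

open Finset

lemma divisors_prime_mul {p k : ℕ} (hp : p.Prime) (hk : k ≠ 0) (hpk : ¬ p ∣ k) :
    (p * k).divisors =
      k.divisors ∪ k.divisors.map ⟨(p * ·), mul_right_injective₀ hp.pos.ne'⟩ := by
  ext d
  simp only [Nat.mem_divisors, Finset.mem_union, Finset.mem_map,
    Function.Embedding.coeFn_mk]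
  constructor
  · rintro ⟨hd, -⟩
    by_cases hpd : p ∣ d
    · obtain ⟨e, rfl⟩ := hpd
      exact Or.inr ⟨e, ⟨(Nat.mul_dvd_mul_iff_left hp.pos).mp hd, hk⟩, rfl⟩
    · left
      refine ⟨?_, hk⟩
      exact (Nat.Coprime.symm ((hp.coprime_iff_not_dvd).2 hpd)).dvd_of_dvd_mul_left hd
  · rintro (⟨hd, -⟩ | ⟨e, ⟨he, -⟩, rfl⟩)
    · exact ⟨hd.mul_left p, mul_ne_zero hp.pos.ne' hk⟩
    · exact ⟨Nat.mul_dvd_mul_left p he, mul_ne_zero hp.pos.ne' hk⟩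

lemma cyclo_expand (m : ℕ) :
    ∀ (F : Finset ℕ), (∀ p ∈ F, p.Prime ∧ ¬ p ∣ m) →
      Polynomial.expand ℤ (∏ p ∈ F, p) (cyclotomic m ℤ) =
        ∏ d ∈ (∏ p ∈ F, p).divisors, cyclotomic (m * d) ℤ := by
  intro F
  induction F using Finset.induction_on with
  | empty => simp [Polynomial.expand_one, Nat.divisors_one]
  | @insert a F ha ih =>
    intro hF
    have hpa : a.Prime := (hF a (Finset.mem_insert_self a F)).1
    have ham : ¬ a ∣ m := (hF a (Finset.mem_insert_self a F)).2
    have hF' : ∀ p ∈ F, p.Prime ∧ ¬ p ∣ m := fun p hp => hF p (Finset.mem_insert_of_mem hp)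
    set k₀ := ∏ p ∈ F, p with hk₀
    have hk₀pos : 0 < k₀ := Finset.prod_pos fun p hp => (hF' p hp).1.pos
    have hak : ¬ a ∣ k₀ := by
      intro h
      obtain ⟨q, hq, haq⟩ := hpa.prime.exists_mem_finset_dvd h
      have : a = q := (Nat.prime_dvd_prime_iff_eq hpa (hF' q hq).1).mp haq
      exact ha (this ▸ hq)
    rw [Finset.prod_insert ha, ← Polynomial.expand_expand, ih hF', map_prod]
    have hstep : ∀ d ∈ k₀.divisors,
        Polynomial.expand ℤ a (cyclotomic (m * d) ℤ) =
          cyclotomic (m * (a * d)) ℤ * cyclotomic (m * d) ℤ := by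
      intro d hd
      have hd' : d ∣ k₀ := (Nat.mem_divisors.mp hd).1
      have hndvd : ¬ a ∣ m * d := by
        intro h
        rcases (Nat.Prime.dvd_mul hpa).mp h with h | h
        · exact ham h
        · exact hak (h.trans hd')
      rw [cyclotomic_expand_eq_cyclotomic_mul hpa hndvd]
      congr 2
      ring
    rw [Finset.prod_congr rfl hstep, Finset.prod_mul_distrib]
    rw [divisors_prime_mul hpa hk₀pos.ne' hak, Finset.prod_union, Finset.prod_map]
    · simp only [Function.Embedding.coeFn_mk]
      exact mul_comm _ _
    · rw [Finset.disjoint_left]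
      rintro x hx hx'
      obtain ⟨e, he, rfl⟩ := Finset.mem_map.mp hx'
      have : a ∣ k₀ := dvd_trans (Dvd.intro e rfl) (Nat.mem_divisors.mp hx).1
      exact hak this

lemma totient_prod_primes :
    ∀ (F : Finset ℕ), (∀ p ∈ F, p.Prime) →
      Nat.totient (∏ p ∈ F, p) = ∏ p ∈ F, (p - 1) := by
  intro F
  induction F using Finset.induction_on with
  | empty => simp
  | @insert a F ha ih =>
    intro hF
    have hpa : a.Prime := hF a (Finset.mem_insert_self a F)
    have hF' : ∀ p ∈ F, p.Prime := fun p hp => hF p (Finset.mem_insert_of_mem hp)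
    have hco : Nat.Coprime a (∏ p ∈ F, p) := by
      apply Nat.Coprime.prod_right
      intro q hq
      exact (Nat.coprime_primes hpa (hF' q hq)).2 (fun h => ha (h ▸ hq))
    rw [Finset.prod_insert ha, Finset.prod_insert ha, Nat.totient_mul hco,
      Nat.totient_prime hpa, ih hF']

lemma natAbs_cyclo_eval_two_le (e : ℕ) :
    ((cyclotomic e ℤ).eval 2).natAbs ≤ 3 ^ e.totient := by
  have hpos : 0 < (cyclotomic e ℤ).eval 2 := cyclotomic_pos' e (by norm_num)
  have h1 : ((((cyclotomic e ℤ).eval 2 : ℤ)) : ℝ) = (cyclotomic e ℝ).eval 2 := by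
    have := cyclotomic.eval_apply (2 : ℤ) e (algebraMap ℤ ℝ)
    simpa using this.symm
  have h2 : (cyclotomic e ℝ).eval 2 ≤ 3 ^ e.totient := by
    have := cyclotomic_eval_le_add_one_pow_totient (q := 2) (by norm_num) e
    norm_num at this
    exact this
  have h3 : ((cyclotomic e ℤ).eval 2) ≤ (3 : ℤ) ^ e.totient := by
    have : ((((cyclotomic e ℤ).eval 2 : ℤ)) : ℝ) ≤ ((3 : ℤ) ^ e.totient : ℝ) := by
      rw [h1]; push_cast; exact h2
    exact_mod_cast this
  have h4 : (((cyclotomic e ℤ).eval 2).natAbs : ℤ) ≤ (3 : ℤ) ^ e.totient := by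
    rw [Int.natAbs_of_nonneg hpos.le]; exact h3
  exact_mod_cast h4

lemma exists_good_primes (B : ℕ) (ε : ℝ) (hε : 0 < ε) :
    ∃ F : Finset ℕ, F.Nonempty ∧ (∀ p ∈ F, p.Prime ∧ B < p) ∧
      (∏ p ∈ F, (1 - 1 / (p : ℝ))) < ε := by
  classical
  set f : ℕ → ℝ := Set.indicator {p | p.Prime} (fun n => 1 / n) with hf
  have hf0 : ∀ n, 0 ≤ f n := fun n => Set.indicator_nonneg (fun i _ => by positivity) n
  have htend : Filter.Tendsto (fun n => ∑ i ∈ Finset.range n, f i)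
      Filter.atTop Filter.atTop :=
    (not_summable_iff_tendsto_nat_atTop_of_nonneg hf0).1 not_summable_one_div_on_primes
  set T : ℝ := max 1 (Real.log (1 / ε) + 1) with hT
  have hT1 : (1 : ℝ) ≤ T := le_max_left _ _
  obtain ⟨M, hM⟩ := (Filter.tendsto_atTop.mp htend (T + (B + 1))).exists
  set F : Finset ℕ := ((Finset.range M).filter Nat.Prime).filter (fun p => B < p) with hFdef
  have hsplit : ∑ i ∈ Finset.range M, f i
      = ∑ i ∈ (Finset.range M).filter Nat.Prime, 1 / (i : ℝ) := by
    rw [Finset.sum_filter]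
    refine Finset.sum_congr rfl fun i _ => ?_
    by_cases hi : i.Prime
    · simp [hf, Set.indicator_apply, hi]
    · simp [hf, Set.indicator_apply, hi]
  have hsum2 := Finset.sum_filter_add_sum_filter_not
    ((Finset.range M).filter Nat.Prime) (fun p => B < p) (fun i => 1 / (i : ℝ))
  have hsmall : ∑ i ∈ ((Finset.range M).filter Nat.Prime).filter (fun p => ¬ B < p),
      1 / (i : ℝ) ≤ B + 1 := by
    have hsub : ((Finset.range M).filter Nat.Prime).filter (fun p => ¬ B < p)
        ⊆ Finset.range (B + 1) := by
      intro i hi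
      simp only [Finset.mem_filter, Finset.mem_range, not_lt] at hi
      exact Finset.mem_range.mpr (Nat.lt_succ_of_le hi.2)
    calc ∑ i ∈ ((Finset.range M).filter Nat.Prime).filter (fun p => ¬ B < p), 1 / (i : ℝ)
        ≤ ∑ _i ∈ ((Finset.range M).filter Nat.Prime).filter (fun p => ¬ B < p), (1 : ℝ) := by
          refine Finset.sum_le_sum fun i hi => ?_
          simp only [Finset.mem_filter] at hi
          have : (1 : ℝ) ≤ i := by exact_mod_cast hi.1.2.one_lt.le
          rw [div_le_one (by linarith)]
          linarith
      _ = (((Finset.range M).filter Nat.Prime).filter (fun p => ¬ B < p)).card := by simp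
      _ ≤ ((B : ℝ) + 1) := by
          have hc := Finset.card_le_card hsub
          rw [Finset.card_range] at hc
          exact_mod_cast hc
  have hbig : T ≤ ∑ p ∈ F, 1 / (p : ℝ) := by
    have hM' : T + (B + 1) ≤ ∑ i ∈ (Finset.range M).filter Nat.Prime, 1 / (i : ℝ) := by
      rw [← hsplit]; exact hM
    have := hsum2
    rw [hFdef]
    linarith
  have hFprime : ∀ p ∈ F, p.Prime ∧ B < p := by
    intro p hp
    rw [hFdef] at hp
    simp only [Finset.mem_filter, Finset.mem_range] at hp
    exact ⟨hp.1.2, hp.2⟩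
  have hne : F.Nonempty := by
    rcases Finset.eq_empty_or_nonempty F with h | h
    · rw [h] at hbig; simp at hbig; linarith
    · exact h
  refine ⟨F, hne, hFprime, ?_⟩
  have hprodle : ∏ p ∈ F, (1 - 1 / (p : ℝ))
      ≤ Real.exp (-∑ p ∈ F, 1 / (p : ℝ)) := by
    have : Real.exp (-∑ p ∈ F, 1 / (p : ℝ)) = ∏ p ∈ F, Real.exp (-(1 / (p : ℝ))) := by
      rw [← Real.exp_sum]
      congr 1
      rw [← Finset.sum_neg_distrib]
    rw [this]
    refine Finset.prod_le_prod (fun p hp => ?_) (fun p hp => ?_)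
    · have h2 : (2 : ℝ) ≤ p := by exact_mod_cast (hFprime p hp).1.two_le
      have : 1 / (p : ℝ) ≤ 1 := by
        rw [div_le_one (by linarith)]; linarith
      linarith
    · have := Real.add_one_le_exp (-(1 / (p : ℝ)))
      linarith
  have hexp : Real.exp (-∑ p ∈ F, 1 / (p : ℝ)) ≤ Real.exp (-T) :=
    Real.exp_le_exp.2 (neg_le_neg hbig)
  have hfinal : Real.exp (-T) < ε := by
    have hlog : Real.log (1 / ε) + 1 ≤ T := le_max_right _ _
    have h1 : -T < -Real.log (1 / ε) := by linarith
    have h2 : Real.exp (-T) < Real.exp (-Real.log (1 / ε)) := Real.exp_lt_exp.2 h1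
    have h3 : Real.exp (-Real.log (1 / ε)) = ε := by
      rw [Real.exp_neg, Real.exp_log (by positivity), one_div, inv_inv]
    linarith [h3 ▸ h2]
  linarith

end Stmt14Aux

theorem stmt_14 (m : ℕ) (hm : 0 < m) :
    ∀ N : ℕ, ∃ n : ℕ, N < n ∧
      (Polynomial.cyclotomic m ℤ).eval (n : ℤ) ∣ (n.factorial : ℤ) := by
  intro N
  classical
  set t := m.totient with ht
  have ht1 : 1 ≤ t := Nat.totient_pos.2 hm
  set ε : ℝ := 1 / (4 * t + 1) with hε
  have hεpos : 0 < ε := by positivity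
  set B := max m (max N 2) with hB
  obtain ⟨F, hFne, hFp, hprod⟩ := Stmt14Aux.exists_good_primes B ε hεpos
  have hprimes : ∀ p ∈ F, p.Prime := fun p hp => (hFp p hp).1
  have hgt : ∀ p ∈ F, B < p := fun p hp => (hFp p hp).2
  have hpm : ∀ p ∈ F, ¬ p ∣ m := by
    intro p hp hdvd
    have h1 : p ≤ m := Nat.le_of_dvd hm hdvd
    have h2 : m ≤ B := le_max_left _ _
    exact absurd (hgt p hp) (by omega)
  set k := ∏ p ∈ F, p with hk
  have hk0 : 0 < k := Finset.prod_pos fun p hp => (hprimes p hp).pos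
  have hkN : N < k := by
    obtain ⟨p, hp⟩ := hFne
    have h1 : p ∣ k := Finset.dvd_prod_of_mem _ hp
    have h2 : p ≤ k := Nat.le_of_dvd hk0 h1
    have h3 : N ≤ B := le_trans (le_max_left _ _) (le_max_right _ _)
    have := hgt p hp
    omega
  have hφk : k.totient = ∏ p ∈ F, (p - 1) := Stmt14Aux.totient_prod_primes F hprimes
  have hφkpos : 0 < k.totient := Nat.totient_pos.2 hk0
  -- real estimate: totient k < k * ε
  have hreal : (k.totient : ℝ) < (k : ℝ) * ε := by
    have hkR : (0 : ℝ) < (k : ℝ) := by exact_mod_cast hk0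
    have hcast : (k.totient : ℝ) = ∏ p ∈ F, ((p : ℝ) - 1) := by
      rw [hφk]
      rw [Nat.cast_prod]
      refine Finset.prod_congr rfl fun p hp => ?_
      have : 1 ≤ p := (hprimes p hp).one_le
      push_cast [Nat.cast_sub this]
      ring
    have hprodeq : ∏ p ∈ F, ((p : ℝ) - 1) = (k : ℝ) * ∏ p ∈ F, (1 - 1 / (p : ℝ)) := by
      rw [hk, Nat.cast_prod, ← Finset.prod_mul_distrib]
      refine Finset.prod_congr rfl fun p hp => ?_
      have hppos : (0 : ℝ) < (p : ℝ) := by exact_mod_cast (hprimes p hp).pos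
      field_simp
    rw [hcast, hprodeq]
    exact (mul_lt_mul_iff_right₀ hkR).2 hprod
  have h4t : 4 * t * k.totient < k := by
    have h1 : (4 * t * k.totient : ℝ) < (4 * t : ℝ) * ((k : ℝ) * ε) := by
      have h4tpos : (0 : ℝ) < (4 * t : ℝ) := by positivity
      calc (4 * t * k.totient : ℝ) = (4 * t : ℝ) * (k.totient : ℝ) := by push_cast; ring
        _ < (4 * t : ℝ) * ((k : ℝ) * ε) := (mul_lt_mul_iff_right₀ h4tpos).2 hreal
    have h2 : (4 * t : ℝ) * ((k : ℝ) * ε) ≤ (k : ℝ) := by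
      rw [hε]
      have hkR : (0 : ℝ) ≤ (k : ℝ) := by positivity
      rw [div_eq_inv_mul, mul_one]
      have hd : (0 : ℝ) < (4 * (t : ℝ) + 1) := by positivity
      have : (4 * (t : ℝ)) * ((4 * (t : ℝ) + 1)⁻¹) ≤ 1 := by
        rw [← div_eq_mul_inv, div_le_one hd]
        linarith
      calc (4 * t : ℝ) * ((k : ℝ) * (4 * (t : ℝ) + 1)⁻¹)
          = (k : ℝ) * ((4 * (t : ℝ)) * (4 * (t : ℝ) + 1)⁻¹) := by push_cast; ring
        _ ≤ (k : ℝ) * 1 := by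
            exact mul_le_mul_of_nonneg_left this hkR
        _ = (k : ℝ) := mul_one _
    have : (4 * t * k.totient : ℝ) < (k : ℝ) := lt_of_lt_of_le h1 h2
    exact_mod_cast this
  -- the candidate n
  refine ⟨2 ^ k, lt_trans hkN (Nat.lt_two_pow_self (n := k)), ?_⟩
  -- coprimality
  have hkm : Nat.Coprime k m := by
    rw [hk]
    apply Nat.Coprime.prod_left
    intro p hp
    exact ((hprimes p hp).coprime_iff_not_dvd).2 (hpm p hp)
  -- eval as product
  set c : ℕ → ℕ := fun d => ((cyclotomic (m * d) ℤ).eval 2).natAbs with hc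
  have h_eval : (cyclotomic m ℤ).eval (((2 ^ k : ℕ) : ℤ))
      = ∏ d ∈ k.divisors, (cyclotomic (m * d) ℤ).eval 2 := by
    have hcast : (((2 ^ k : ℕ) : ℤ)) = (2 : ℤ) ^ k := by push_cast; ring
    rw [hcast, ← Polynomial.expand_eval,
      Stmt14Aux.cyclo_expand m F (fun p hp => ⟨hprimes p hp, hpm p hp⟩), eval_prod]
  have hnatAbs : ((cyclotomic m ℤ).eval (((2 ^ k : ℕ) : ℤ))).natAbs
      = ∏ d ∈ k.divisors, c d := by
    rw [h_eval]
    exact map_prod Int.natAbsHom _ _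
  -- bound each factor
  set Q := 3 ^ (t * k.totient) with hQ
  have hc_le : ∀ d ∈ k.divisors, c d ≤ Q := by
    intro d hd
    obtain ⟨hdk, -⟩ := Nat.mem_divisors.mp hd
    have h1 : c d ≤ 3 ^ (m * d).totient := Stmt14Aux.natAbs_cyclo_eval_two_le (m * d)
    have hcop : Nat.Coprime m d := (Nat.Coprime.coprime_dvd_left hdk hkm).symm
    have h2 : (m * d).totient = t * d.totient := by
      rw [Nat.totient_mul hcop, ht]
    have h3 : d.totient ≤ k.totient :=
      Nat.le_of_dvd hφkpos (Nat.totient_dvd_of_dvd hdk)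
    calc c d ≤ 3 ^ (m * d).totient := h1
      _ = 3 ^ (t * d.totient) := by rw [h2]
      _ ≤ 3 ^ (t * k.totient) := Nat.pow_le_pow_right (by norm_num) (Nat.mul_le_mul_left t h3)
  have hc_pos : ∀ d, 1 ≤ c d := by
    intro d
    have : 0 < (cyclotomic (m * d) ℤ).eval 2 := cyclotomic_pos' (m * d) (by norm_num)
    exact Int.natAbs_pos.2 this.ne'
  -- sum bound
  have hcard : k.divisors.card ≤ k := by
    have hsub : k.divisors ⊆ Finset.Icc 1 k := by
      intro d hd
      obtain ⟨h1, h2⟩ := Nat.mem_divisors.mp hd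
      exact Finset.mem_Icc.2 ⟨(Nat.pos_of_dvd_of_pos h1 hk0), Nat.le_of_dvd hk0 h1⟩
    calc k.divisors.card ≤ (Finset.Icc 1 k).card := Finset.card_le_card hsub
      _ = k := by rw [Nat.card_Icc]; omega
  have hk_le : k ≤ k.totient ^ 2 := by
    have hstep : ∀ p ∈ F, p ≤ (p - 1) ^ 2 := by
      intro p hp
      have h3 : 3 ≤ p := by
        have := hgt p hp
        have : 2 < p := lt_of_le_of_lt (le_trans (le_max_right _ _) (le_max_right _ _)) this
        omega
      nlinarith [Nat.sub_add_cancel (by omega : 1 ≤ p)]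
    calc k = ∏ p ∈ F, p := hk
      _ ≤ ∏ p ∈ F, (p - 1) ^ 2 := Finset.prod_le_prod' hstep
      _ = (∏ p ∈ F, (p - 1)) ^ 2 := by rw [Finset.prod_pow]
      _ = k.totient ^ 2 := by rw [hφk]
  have hsum_le : ∑ d ∈ k.divisors, c d ≤ 2 ^ k := by
    have h1 : ∑ d ∈ k.divisors, c d ≤ k.divisors.card * Q :=
      Finset.sum_le_card_nsmul _ _ Q hc_le
    have h2 : k.divisors.card * Q ≤ k * Q := Nat.mul_le_mul_right Q hcard
    have h3 : k ≤ 2 ^ (2 * k.totient) := by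
      calc k ≤ k.totient ^ 2 := hk_le
        _ ≤ (2 ^ k.totient) ^ 2 := Nat.pow_le_pow_left (Nat.lt_two_pow_self (n := _)).le 2
        _ = 2 ^ (2 * k.totient) := by rw [← pow_mul, mul_comm]
    have h4 : Q ≤ 2 ^ (2 * (t * k.totient)) := by
      calc Q = 3 ^ (t * k.totient) := hQ
        _ ≤ 4 ^ (t * k.totient) := Nat.pow_le_pow_left (by norm_num) _
        _ = 2 ^ (2 * (t * k.totient)) := by
            rw [show (4 : ℕ) = 2 ^ 2 by norm_num, ← pow_mul]
    have h5 : k * Q ≤ 2 ^ (2 * k.totient + 2 * (t * k.totient)) := by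
      rw [pow_add]
      exact Nat.mul_le_mul h3 h4
    have h6 : 2 * k.totient + 2 * (t * k.totient) ≤ 4 * t * k.totient := by
      have : k.totient ≤ t * k.totient := Nat.le_mul_of_pos_left _ ht1
      nlinarith
    calc ∑ d ∈ k.divisors, c d ≤ k * Q := le_trans h1 h2
      _ ≤ 2 ^ (2 * k.totient + 2 * (t * k.totient)) := h5
      _ ≤ 2 ^ (4 * t * k.totient) := Nat.pow_le_pow_right (by norm_num) h6
      _ ≤ 2 ^ k := Nat.pow_le_pow_right (by norm_num) h4t.le
  -- divisibility chain
  have hdvd : (∏ d ∈ k.divisors, c d) ∣ (2 ^ k).factorial := by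
    have d1 : (∏ d ∈ k.divisors, c d) ∣ ∏ d ∈ k.divisors, (c d).factorial :=
      Finset.prod_dvd_prod_of_dvd _ _ (fun d _ => Nat.dvd_factorial (hc_pos d) le_rfl)
    have d2 : (∏ d ∈ k.divisors, (c d).factorial) ∣ (∑ d ∈ k.divisors, c d).factorial :=
      Nat.prod_factorial_dvd_factorial_sum _ _
    have d3 : (∑ d ∈ k.divisors, c d).factorial ∣ (2 ^ k).factorial :=
      Nat.factorial_dvd_factorial hsum_le
    exact dvd_trans (dvd_trans d1 d2) d3
  rw [← hnatAbs] at hdvd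
  exact Int.natAbs_dvd.1 (Int.natCast_dvd_natCast.2 hdvd)
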